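/- (Discrete Noether's theorem.) Let E be a real normed vector space and L : E × E → ℝ Fréchet differentiable. Suppose (X, f), with X : E → E and f : E → ℝ, is a Noether symmetry of L. Define F : E × E → ℝ by F(x,y) = −D₁L(x,y)(X(x)) − f(x). Then F is a constant of the motion: for any x, y, z ∈ E satisfying the discrete Euler–Lagrange equation D₂L(x,y) + D₁L(y,z) = 0 one has F(y,z) = F(x,y). In particular, if ξ is a discrete Lagrangian evolution operator for L, then F ∘ ξ = F. -/
import Mathlib

variable {E : Type*} [NormedAddCommGroup E] [NormedSpace ℝ E]

/-- The Fréchet derivative of `z ↦ L (z, y)` at `x`. -/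
noncomputable def D1 (L : E × E → ℝ) (x y : E) : E →L[ℝ] ℝ :=
  fderiv ℝ (fun z => L (z, y)) x

/-- The Fréchet derivative of `z ↦ L (x, z)` at `y`. -/
noncomputable def D2 (L : E × E → ℝ) (x y : E) : E →L[ℝ] ℝ :=
  fderiv ℝ (fun z => L (x, z)) y

/-- The Noether function `F(x,y) = −D₁L(x,y)(X(x)) − f(x)` associated to a Noether
symmetry `(X, f)` of `L`. -/
noncomputable def noetherFn (L : E × E → ℝ) (X : E → E) (f : E → ℝ) (p : E × E) : ℝ :=
  -(D1 L p.1 p.2 (X p.1)) - f p.1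

/-- Discrete Noether's theorem: if `(X, f)` is a Noether symmetry of `L`, then
`F(x,y) = −D₁L(x,y)(X(x)) − f(x)` is a constant of the motion: it is preserved along
solutions of the discrete Euler–Lagrange equations, and `F ∘ ξ = F` for any discrete
Lagrangian evolution operator `ξ`. -/
theorem discrete_noether
    (L : E × E → ℝ) (hL : Differentiable ℝ L) (X : E → E) (f : E → ℝ)
    (hNoe : ∀ x y : E, D1 L x y (X x) + D2 L x y (X y) = f y - f x) :
    (∀ x y z : E, D2 L x y + D1 L y z = 0 →
        noetherFn L X f (y, z) = noetherFn L X f (x, y))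
      ∧
    (∀ ξ : E × E → E × E, (∀ p : E × E, (ξ p).1 = p.2) →
      (∀ p : E × E, D2 L p.1 p.2 + D1 L (ξ p).1 (ξ p).2 = 0) →
      noetherFn L X f ∘ ξ = noetherFn L X f) := by
  have key : ∀ x y z : E, D2 L x y + D1 L y z = 0 →
      noetherFn L X f (y, z) = noetherFn L X f (x, y) := by
    intro x y z h
    have h1 : D1 L y z (X y) = -(D2 L x y (X y)) := by
      have h' := congrArg (fun T : E →L[ℝ] ℝ => T (X y)) h
      simp only [ContinuousLinearMap.add_apply, ContinuousLinearMap.zero_apply] at h'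
      linarith
    have h2 := hNoe x y
    simp only [noetherFn]
    rw [h1]
    linarith
  refine ⟨key, fun ξ h1 h2 => funext fun p => ?_⟩
  have := key p.1 p.2 (ξ p).2 (h1 p ▸ h2 p)
  rw [Function.comp_apply, ← Prod.mk.eta (p := ξ p), h1 p, this, Prod.mk.eta]
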